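/- Let m>0, ρ>0, κ∈ℕ and r>0 with r≠2m. Then ε_{ρ,κ} is differentiable at r with derivative ε_{ρ,κ}'(r) = ε_{ρ,κ}(r) · ρ / ((2κ+1)·(r−2m)·((r−2m)² + ρ)). In particular ε_{ρ,κ}'(r) > 0. -/

import Mathlib

/-- The smoothing function `ε_{ρ,κ}` of the paper, written with the real
odd-root convention: `ε_{ρ,κ}(r) = sgn(r−2m)·|r−2m|^{1/(2κ+1)} /
((r−2m)² + ρ)^{1/(2(2κ+1))}`. -/
noncomputable def epsSmooth (m ρ : ℝ) (κ : ℕ) (r : ℝ) : ℝ :=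
  Real.sign (r - 2 * m) * |r - 2 * m| ^ ((1 : ℝ) / (2 * κ + 1)) /
    ((r - 2 * m) ^ 2 + ρ) ^ ((1 : ℝ) / (2 * (2 * κ + 1)))

/-- Away from the horizon `r = 2m`, the smoothing function `ε_{ρ,κ}` is
differentiable with derivative `ε_{ρ,κ}(r)·ρ/((2κ+1)(r−2m)((r−2m)²+ρ))`,
which is positive. -/
theorem epsSmooth_hasDerivAt
    (m ρ : ℝ) (hm : 0 < m) (hρ : 0 < ρ) (κ : ℕ) (r : ℝ) (hr : 0 < r)
    (hne : r ≠ 2 * m) :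
    HasDerivAt (epsSmooth m ρ κ)
      (epsSmooth m ρ κ r * ρ /
        ((2 * κ + 1) * (r - 2 * m) * ((r - 2 * m) ^ 2 + ρ))) r ∧
    0 < epsSmooth m ρ κ r * ρ /
        ((2 * κ + 1) * (r - 2 * m) * ((r - 2 * m) ^ 2 + ρ)) := by
  have hx : r - 2 * m ≠ 0 := sub_ne_zero.mpr hne
  set a : ℝ := (1 : ℝ) / (2 * κ + 1) with ha_def
  set b : ℝ := (1 : ℝ) / (2 * (2 * κ + 1)) with hb_def
  have hk : (0 : ℝ) < 2 * κ + 1 := by positivity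
  have ha : 0 < a := by positivity
  have hD : (0 : ℝ) < (r - 2 * m) ^ 2 + ρ := by positivity
  have hDb : (0 : ℝ) < ((r - 2 * m) ^ 2 + ρ) ^ b := Real.rpow_pos_of_pos hD b
  -- derivative of the denominator
  have hden : HasDerivAt (fun s : ℝ => ((s - 2 * m) ^ 2 + ρ) ^ b)
      ((2 * (r - 2 * m) ^ 1 * 1) * b * ((r - 2 * m) ^ 2 + ρ) ^ (b - 1)) r := by
    have h1 : HasDerivAt (fun s : ℝ => (s - 2 * m) ^ 2 + ρ)
        (2 * (r - 2 * m) ^ 1 * 1) r := by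
      simpa using (((hasDerivAt_id r).sub_const (2 * m)).pow 2).add_const ρ
    exact h1.rpow_const (Or.inl hD.ne')
  rcases hne.lt_or_gt with hlt | hlt
  · -- r < 2 m : sign is -1
    have hxneg : r - 2 * m < 0 := by linarith
    set y : ℝ := 2 * m - r with hy_def
    have hy : 0 < y := by simp [hy_def]; linarith
    have heps : epsSmooth m ρ κ r = -(y ^ a) / ((r - 2 * m) ^ 2 + ρ) ^ b := by
      unfold epsSmooth
      rw [Real.sign_of_neg hxneg, abs_of_neg hxneg]
      simp [hy_def, ha_def, hb_def]
    have hev : epsSmooth m ρ κ =ᶠ[nhds r]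
        fun s => -((2 * m - s) ^ a) / ((s - 2 * m) ^ 2 + ρ) ^ b := by
      filter_upwards [eventually_lt_nhds hlt] with s hs
      have hs' : s - 2 * m < 0 := by linarith
      unfold epsSmooth
      rw [Real.sign_of_neg hs', abs_of_neg hs']
      simp [ha_def, hb_def]
    have hnum : HasDerivAt (fun s : ℝ => -((2 * m - s) ^ a))
        (a * y ^ (a - 1)) r := by
      have h1 : HasDerivAt (fun s : ℝ => (2 * m - s) ^ a)
          ((-1) * a * y ^ (a - 1)) r := by
        have h0 : HasDerivAt (fun s : ℝ => 2 * m - s) (-1) r := by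
          simpa using (hasDerivAt_id r).const_sub (2 * m)
        simpa [hy_def] using h0.rpow_const (Or.inl hy.ne')
      have h2 := h1.neg
      simp only [neg_mul, one_mul, neg_neg] at h2
      exact h2
    have hdiv := hnum.div hden hDb.ne'
    have hval : (a * y ^ (a - 1) * ((r - 2 * m) ^ 2 + ρ) ^ b -
          -(y ^ a) * ((2 * (r - 2 * m) ^ 1 * 1) * b * ((r - 2 * m) ^ 2 + ρ) ^ (b - 1))) /
          (((r - 2 * m) ^ 2 + ρ) ^ b) ^ 2 =
        epsSmooth m ρ κ r * ρ /
          ((2 * κ + 1) * (r - 2 * m) * ((r - 2 * m) ^ 2 + ρ)) := by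
      rw [heps]
      have e1 : y ^ (a - 1) = y ^ a / y := by
        rw [Real.rpow_sub hy, Real.rpow_one]
      have e2 : ((r - 2 * m) ^ 2 + ρ) ^ (b - 1) =
          ((r - 2 * m) ^ 2 + ρ) ^ b / ((r - 2 * m) ^ 2 + ρ) := by
        rw [Real.rpow_sub hD, Real.rpow_one]
      rw [e1, e2]
      have hx' : r - 2 * m = -y := by simp [hy_def]
      rw [hx']
      have hsq : (-y : ℝ) ^ 2 = y ^ 2 := by ring
      rw [hsq]
      have hDy : (0 : ℝ) < y ^ 2 + ρ := by positivity
      have hYa : y ^ a ≠ 0 := (Real.rpow_pos_of_pos hy a).ne'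
      have hB : (y ^ 2 + ρ) ^ b ≠ 0 := (Real.rpow_pos_of_pos hDy b).ne'
      field_simp [ha_def, hb_def]
      rw [ha_def, hb_def]; field_simp; ring
    have hder : HasDerivAt (epsSmooth m ρ κ)
        (epsSmooth m ρ κ r * ρ /
          ((2 * κ + 1) * (r - 2 * m) * ((r - 2 * m) ^ 2 + ρ))) r := by
      rw [← hval]; exact hdiv.congr_of_eventuallyEq hev
    refine ⟨hder, ?_⟩
    have hepsneg : epsSmooth m ρ κ r < 0 := by
      rw [heps]
      exact div_neg_of_neg_of_pos (neg_neg_iff_pos.mpr (Real.rpow_pos_of_pos hy a)) hDb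
    have h1 : epsSmooth m ρ κ r * ρ < 0 := mul_neg_of_neg_of_pos hepsneg hρ
    have h2 : (2 * κ + 1) * (r - 2 * m) * ((r - 2 * m) ^ 2 + ρ) < 0 :=
      mul_neg_of_neg_of_pos (mul_neg_of_pos_of_neg hk hxneg) hD
    exact div_pos_of_neg_of_neg h1 h2
  · -- 2 m < r : sign is 1
    have hxpos : 0 < r - 2 * m := by linarith
    have heps : epsSmooth m ρ κ r =
        (r - 2 * m) ^ a / ((r - 2 * m) ^ 2 + ρ) ^ b := by
      unfold epsSmooth
      rw [Real.sign_of_pos hxpos, abs_of_pos hxpos, one_mul]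
    have hev : epsSmooth m ρ κ =ᶠ[nhds r]
        fun s => (s - 2 * m) ^ a / ((s - 2 * m) ^ 2 + ρ) ^ b := by
      filter_upwards [eventually_gt_nhds hlt] with s hs
      have hs' : 0 < s - 2 * m := by linarith
      unfold epsSmooth
      rw [Real.sign_of_pos hs', abs_of_pos hs', one_mul]
    have hnum : HasDerivAt (fun s : ℝ => (s - 2 * m) ^ a)
        (1 * a * (r - 2 * m) ^ (a - 1)) r :=
      ((hasDerivAt_id r).sub_const (2 * m)).rpow_const (Or.inl hx)
    have hdiv := hnum.div hden hDb.ne'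
    have hval : (1 * a * (r - 2 * m) ^ (a - 1) * ((r - 2 * m) ^ 2 + ρ) ^ b -
          (r - 2 * m) ^ a * ((2 * (r - 2 * m) ^ 1 * 1) * b * ((r - 2 * m) ^ 2 + ρ) ^ (b - 1))) /
          (((r - 2 * m) ^ 2 + ρ) ^ b) ^ 2 =
        epsSmooth m ρ κ r * ρ /
          ((2 * κ + 1) * (r - 2 * m) * ((r - 2 * m) ^ 2 + ρ)) := by
      rw [heps]
      have e1 : (r - 2 * m) ^ (a - 1) = (r - 2 * m) ^ a / (r - 2 * m) := by
        rw [Real.rpow_sub hxpos, Real.rpow_one]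
      have e2 : ((r - 2 * m) ^ 2 + ρ) ^ (b - 1) =
          ((r - 2 * m) ^ 2 + ρ) ^ b / ((r - 2 * m) ^ 2 + ρ) := by
        rw [Real.rpow_sub hD, Real.rpow_one]
      rw [e1, e2]
      have hYa : (r - 2 * m) ^ a ≠ 0 := (Real.rpow_pos_of_pos hxpos a).ne'
      field_simp [ha_def, hb_def]
      rw [ha_def, hb_def]; field_simp; ring
    have hder : HasDerivAt (epsSmooth m ρ κ)
        (epsSmooth m ρ κ r * ρ /
          ((2 * κ + 1) * (r - 2 * m) * ((r - 2 * m) ^ 2 + ρ))) r := by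
      rw [← hval]; exact hdiv.congr_of_eventuallyEq hev
    refine ⟨hder, ?_⟩
    have hepspos : 0 < epsSmooth m ρ κ r := by
      rw [heps]; exact div_pos (Real.rpow_pos_of_pos hxpos a) hDb
    positivity
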